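/- Let $g \in (\mathbb{C}[[w]]_{*})^m$ be an $m$-tuple of formal power series with $g(0)=0$ (in variables $w$), and let $(\psi_\beta)_{\beta\in\mathbb{N}^m}$ and $(\omega_\beta)_{\beta\in\mathbb{N}^m}$ be families of formal power series in $\mathbb{C}[[w]]$. Then the infinite triangular system $\psi_\beta + \sum_{\gamma\in\mathbb{N}^m_*} \frac{(\beta+\gamma)!}{\beta!\,\gamma!}\, g^\gamma\, \psi_{\beta+\gamma} = \omega_\beta$ for all $\beta\in\mathbb{N}^m$ holds if and only if $\psi_\beta = \omega_\beta + \sum_{\gamma\in\mathbb{N}^m_*} (-1)^{|\gamma|} \frac{(\beta+\gamma)!}{\beta!\,\gamma!}\, g^\gamma\, \omega_{\beta+\gamma}$ for all $\beta\in\mathbb{N}^m$. (Here $g^\gamma = g_1^{\gamma_1}\cdots g_m^{\gamma_m}$, $\mathbb{N}^m_* = \mathbb{N}^m\setminus\{0\}$, and each sum is a well-defined formal series since $g(0)=0$.) -/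

import Mathlib

/- STATEMENT 0: Formal inversion of the infinite triangular system
   ψ_β + ∑_{γ≠0} ((β+γ)!/(β!γ!)) g^γ ψ_{β+γ} = ω_β
   ⟺ ψ_β = ω_β + ∑_{γ≠0} (-1)^{|γ|} ((β+γ)!/(β!γ!)) g^γ ω_{β+γ}. -/

noncomputable section

def mdeg {σ : Type*} (e : σ →₀ ℕ) : ℕ := e.sum fun _ n => n

/-- Formal sum of a family `F γ` of power series, assuming (as in the application)
that `F γ` has order at least `|γ|`, so that each coefficient is a finite sum. -/
def mSum {m : ℕ} (F : (Fin m →₀ ℕ) → MvPowerSeries (Fin m) ℂ) : MvPowerSeries (Fin m) ℂ :=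
  fun e => ∑ γ ∈ Finset.Iic (Finsupp.equivFunOnFinite.symm fun _ : Fin m => mdeg e),
    MvPowerSeries.coeff e (F γ)

/-- The multinomial coefficient (β+γ)!/(β!·γ!) = ∏_j C(β_j+γ_j, γ_j). -/
def binomC {m : ℕ} (β γ : Fin m →₀ ℕ) : ℂ :=
  ((∏ j : Fin m, (β j + γ j).choose (γ j) : ℕ) : ℂ)

namespace FTI

open Finset MvPowerSeries

variable {m : ℕ}

lemma mdeg_eq (e : Fin m →₀ ℕ) : mdeg e = ∑ j, e j :=
  Finsupp.sum_fintype _ _ (fun _ => rfl)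

lemma mdeg_add (a b : Fin m →₀ ℕ) : mdeg (a + b) = mdeg a + mdeg b := by
  simp [mdeg_eq, Finset.sum_add_distrib]

lemma mdeg_mono {a b : Fin m →₀ ℕ} (h : a ≤ b) : mdeg a ≤ mdeg b := by
  rw [mdeg_eq, mdeg_eq]
  exact Finset.sum_le_sum fun j _ => (Finsupp.le_def.mp h j)

lemma apply_le_mdeg (e : Fin m →₀ ℕ) (j : Fin m) : e j ≤ mdeg e := by
  rw [mdeg_eq]
  exact Finset.single_le_sum (fun _ _ => Nat.zero_le _) (Finset.mem_univ j)

lemma mdeg_zero : mdeg (0 : Fin m →₀ ℕ) = 0 := by simp [mdeg_eq]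

lemma eq_zero_of_mdeg_eq_zero {e : Fin m →₀ ℕ} (h : mdeg e = 0) : e = 0 := by
  ext j
  have := apply_le_mdeg e j
  simp only [Finsupp.coe_zero, Pi.zero_apply]
  omega

/-- "order at least k" predicate. -/
def ordGe (A : MvPowerSeries (Fin m) ℂ) (k : ℕ) : Prop :=
  ∀ e : Fin m →₀ ℕ, mdeg e < k → MvPowerSeries.coeff e A = 0

lemma ordGe_zero (A : MvPowerSeries (Fin m) ℂ) : ordGe A 0 := fun _ h => absurd h (by omega)

lemma ordGe_zero_series (k : ℕ) : ordGe (0 : MvPowerSeries (Fin m) ℂ) k := fun _ _ => by simp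

lemma ordGe_smul {A : MvPowerSeries (Fin m) ℂ} {k : ℕ} (c : ℂ) (h : ordGe A k) :
    ordGe (c • A) k := fun e he => by
  rw [map_smul, h e he, smul_zero]

lemma ordGe_mul {A B : MvPowerSeries (Fin m) ℂ} {a b : ℕ} (hA : ordGe A a) (hB : ordGe B b) :
    ordGe (A * B) (a + b) := by
  intro e he
  rw [MvPowerSeries.coeff_mul]
  apply Finset.sum_eq_zero
  rintro ⟨p, q⟩ hpq
  rw [Finset.HasAntidiagonal.mem_antidiagonal] at hpq
  have : mdeg p + mdeg q < a + b := by rw [← mdeg_add, hpq]; exact he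
  rcases lt_or_ge (mdeg p) a with h | h
  · rw [hA p h, zero_mul]
  · rw [hB q (by omega), mul_zero]

lemma ordGe_pow {A : MvPowerSeries (Fin m) ℂ} (hA : ordGe A 1) (k : ℕ) : ordGe (A ^ k) k := by
  induction k with
  | zero => exact ordGe_zero _
  | succ n ih =>
    rw [pow_succ]
    exact ordGe_mul ih hA

variable {g : Fin m → MvPowerSeries (Fin m) ℂ}

lemma ordGe_g (hg : ∀ j, MvPowerSeries.constantCoeff (g j) = 0) (j : Fin m) :
    ordGe (g j) 1 := by
  intro e he
  have : e = 0 := eq_zero_of_mdeg_eq_zero (by omega)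
  rw [this, MvPowerSeries.coeff_zero_eq_constantCoeff]
  exact hg j

/-- abbreviation for g^γ. -/
def P (g : Fin m → MvPowerSeries (Fin m) ℂ) (γ : Fin m →₀ ℕ) : MvPowerSeries (Fin m) ℂ :=
  ∏ j : Fin m, g j ^ γ j

lemma ordGe_P (hg : ∀ j, MvPowerSeries.constantCoeff (g j) = 0) (γ : Fin m →₀ ℕ) :
    ordGe (P g γ) (mdeg γ) := by
  rw [mdeg_eq, P]
  have key : ∀ s : Finset (Fin m), ordGe (∏ j ∈ s, g j ^ γ j) (∑ j ∈ s, γ j) := by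
    intro s
    induction s using Finset.induction with
    | empty => simpa using ordGe_zero (1 : MvPowerSeries (Fin m) ℂ)
    | insert a s' hx ih =>
      rw [Finset.prod_insert hx, Finset.sum_insert hx]
      exact ordGe_mul (ordGe_pow (ordGe_g hg a) (γ a)) ih
  exact key Finset.univ

lemma P_mul_P (γ δ : Fin m →₀ ℕ) : P g γ * P g δ = P g (γ + δ) := by
  rw [P, P, P, ← Finset.prod_mul_distrib]
  apply Finset.prod_congr rfl
  intro j _
  rw [Finsupp.add_apply, pow_add]

lemma P_zero : P g 0 = 1 := by simp [P]

lemma coeff_P_mul_eq_zero (hg : ∀ j, MvPowerSeries.constantCoeff (g j) = 0)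
    {σ e : Fin m →₀ ℕ} (h : mdeg e < mdeg σ) (x : MvPowerSeries (Fin m) ℂ) :
    MvPowerSeries.coeff e (P g σ * x) = 0 := by
  have h2 := ordGe_mul (ordGe_P hg σ) (ordGe_zero x)
  rw [add_zero] at h2
  exact h2 e h

/-- The canonical finite index set of all γ with |γ| ≤ |e|. -/
def Dd (e : Fin m →₀ ℕ) : Finset (Fin m →₀ ℕ) :=
  (Finset.Iic (Finsupp.equivFunOnFinite.symm fun _ : Fin m => mdeg e)).filter
    (fun γ => mdeg γ ≤ mdeg e)

lemma mem_Dd {e γ : Fin m →₀ ℕ} : γ ∈ Dd e ↔ mdeg γ ≤ mdeg e := by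
  constructor
  · intro h
    exact (Finset.mem_filter.mp h).2
  · intro h
    refine Finset.mem_filter.mpr ⟨Finset.mem_Iic.mpr ?_, h⟩
    refine Finsupp.le_def.mpr fun j => ?_
    rw [Finsupp.coe_equivFunOnFinite_symm]
    exact le_trans (apply_le_mdeg γ j) h

lemma zero_mem_Dd (e : Fin m →₀ ℕ) : 0 ∈ Dd e := mem_Dd.mpr (by rw [mdeg_zero]; omega)

/-- coefficient of an `mSum`, as a sum over any sufficiently large index set. -/
lemma coeff_mSum (F : (Fin m →₀ ℕ) → MvPowerSeries (Fin m) ℂ)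
    (hF : ∀ γ, ordGe (F γ) (mdeg γ)) (e : Fin m →₀ ℕ) (S : Finset (Fin m →₀ ℕ))
    (hS : ∀ γ, mdeg γ ≤ mdeg e → γ ∈ S) :
    MvPowerSeries.coeff e (mSum F) = ∑ γ ∈ S, MvPowerSeries.coeff e (F γ) := by
  set N : Fin m →₀ ℕ := Finsupp.equivFunOnFinite.symm fun _ : Fin m => mdeg e with hN
  have key : ∀ γ : Fin m →₀ ℕ, ¬ mdeg γ ≤ mdeg e → MvPowerSeries.coeff e (F γ) = 0 :=
    fun γ h => hF γ e (by omega)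
  have h1 : MvPowerSeries.coeff e (mSum F) =
      ∑ γ ∈ Finset.Iic N, MvPowerSeries.coeff e (F γ) := rfl
  rw [h1]
  have h2 : ∑ γ ∈ Finset.Iic N, MvPowerSeries.coeff e (F γ)
      = ∑ γ ∈ Finset.Iic N ∪ S, MvPowerSeries.coeff e (F γ) := by
    apply Finset.sum_subset Finset.subset_union_left
    intro γ hγ hγ'
    apply key
    intro hle
    refine hγ' (Finset.mem_Iic.mpr (Finsupp.le_def.mpr fun j => ?_))
    rw [hN, Finsupp.coe_equivFunOnFinite_symm]
    exact le_trans (apply_le_mdeg γ j) hle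
  have h3 : ∑ γ ∈ S, MvPowerSeries.coeff e (F γ)
      = ∑ γ ∈ Finset.Iic N ∪ S, MvPowerSeries.coeff e (F γ) := by
    apply Finset.sum_subset Finset.subset_union_right
    intro γ hγ hγ'
    apply key
    intro hle
    apply hγ'
    exact hS γ hle
  rw [h2, ← h3]

lemma coeff_mul_mSum (A : MvPowerSeries (Fin m) ℂ)
    (F : (Fin m →₀ ℕ) → MvPowerSeries (Fin m) ℂ)
    (hF : ∀ γ, ordGe (F γ) (mdeg γ)) (e : Fin m →₀ ℕ) :
    MvPowerSeries.coeff e (A * mSum F) =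
      ∑ γ ∈ Dd e, MvPowerSeries.coeff e (A * F γ) := by
  rw [MvPowerSeries.coeff_mul]
  have step : ∀ pq ∈ Finset.HasAntidiagonal.antidiagonal e,
      MvPowerSeries.coeff pq.1 A * MvPowerSeries.coeff pq.2 (mSum F)
      = ∑ γ ∈ Dd e, MvPowerSeries.coeff pq.1 A * MvPowerSeries.coeff pq.2 (F γ) := by
    intro pq hpq
    rw [Finset.HasAntidiagonal.mem_antidiagonal] at hpq
    have hq : mdeg pq.2 ≤ mdeg e := by
      rw [← hpq, mdeg_add]; omega
    rw [coeff_mSum F hF pq.2 (Dd e) (fun γ hγ => mem_Dd.mpr (le_trans hγ hq)), Finset.mul_sum]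
  rw [Finset.sum_congr rfl step, Finset.sum_comm]
  apply Finset.sum_congr rfl
  intro γ _
  rw [MvPowerSeries.coeff_mul]

/- ### combinatorial identities -/

lemma nat_choose_id (b k l : ℕ) :
    (b + k).choose k * (b + k + l).choose l
      = (b + (k + l)).choose (k + l) * (k + l).choose k := by
  have key : ∀ x y : ℕ, (x + y).choose y * (y.factorial * x.factorial) = (x + y).factorial := by
    intro x y
    have h := Nat.choose_mul_factorial_mul_factorial (Nat.le_add_left y x)
    rw [Nat.add_sub_cancel] at h
    rw [← h]; ring
  have hpos : 0 < b.factorial * k.factorial * l.factorial :=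
    Nat.mul_pos (Nat.mul_pos b.factorial_pos k.factorial_pos) l.factorial_pos
  apply Nat.eq_of_mul_eq_mul_right hpos
  calc (b + k).choose k * (b + k + l).choose l * (b.factorial * k.factorial * l.factorial)
      = ((b + k).choose k * (k.factorial * b.factorial)) *
        ((b + k + l).choose l * l.factorial) := by ring
    _ = (b + k).factorial * ((b + k + l).choose l * l.factorial) := by rw [key b k]
    _ = (b + k + l).choose l * (l.factorial * (b + k).factorial) := by ring
    _ = (b + k + l).factorial := key (b + k) l
    _ = (b + (k + l)).factorial := by rw [add_assoc]
    _ = (b + (k + l)).choose (k + l) * ((k + l).factorial * b.factorial) := (key b (k + l)).symm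
    _ = (b + (k + l)).choose (k + l) * (((k + l).choose k * (k.factorial * l.factorial))
          * b.factorial) := by rw [add_comm k l, key l k, add_comm l k]
    _ = (b + (k + l)).choose (k + l) * (k + l).choose k *
        (b.factorial * k.factorial * l.factorial) := by ring

lemma binomC_zero_right (β : Fin m →₀ ℕ) : binomC β 0 = 1 := by
  simp [binomC]

lemma binom_split (β γ δ : Fin m →₀ ℕ) :
    binomC β γ * binomC (β + γ) δ
      = binomC β (γ + δ) * ∏ j : Fin m, (((γ + δ) j).choose (γ j) : ℂ) := by
  simp only [binomC, Finsupp.add_apply]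
  rw [← Nat.cast_prod, ← Nat.cast_mul, ← Nat.cast_mul]
  rw [← Finset.prod_mul_distrib, ← Finset.prod_mul_distrib]
  norm_cast
  apply Finset.prod_congr rfl
  intro j _
  exact nat_choose_id (β j) (γ j) (δ j)

lemma Iic_nat (n : ℕ) : Finset.Iic n = Finset.range (n + 1) := by
  ext x; simp [Nat.lt_succ_iff]

lemma vander (ε : ℂ) {σ : Fin m →₀ ℕ} (hσ : σ ≠ 0) :
    ∑ γ ∈ Finset.Iic σ,
      (ε ^ mdeg γ * (-ε) ^ mdeg (σ - γ) * ∏ j : Fin m, ((σ j).choose (γ j) : ℂ)) = 0 := by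
  have step1 : ∀ γ ∈ Finset.Iic σ,
      ε ^ mdeg γ * (-ε) ^ mdeg (σ - γ) * ∏ j : Fin m, ((σ j).choose (γ j) : ℂ)
      = ∏ j : Fin m, (ε ^ γ j * (-ε) ^ (σ j - γ j) * ((σ j).choose (γ j) : ℂ)) := by
    intro γ _
    have hs : mdeg (σ - γ) = ∑ j, (σ j - γ j) := by
      rw [mdeg_eq]
      exact Finset.sum_congr rfl fun j _ => Finsupp.tsub_apply σ γ j
    rw [mdeg_eq, hs, ← Finset.prod_pow_eq_pow_sum, ← Finset.prod_pow_eq_pow_sum,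
      ← Finset.prod_mul_distrib, ← Finset.prod_mul_distrib]
  rw [Finset.sum_congr rfl step1]
  have step2 : ∑ γ ∈ Finset.Iic σ,
        ∏ j : Fin m, (ε ^ γ j * (-ε) ^ (σ j - γ j) * ((σ j).choose (γ j) : ℂ))
      = ∑ f ∈ Fintype.piFinset (fun j => Finset.Iic (σ j)),
        ∏ j : Fin m, (ε ^ f j * (-ε) ^ (σ j - f j) * ((σ j).choose (f j) : ℂ)) := by
    refine Finset.sum_nbij' (fun γ => (γ : Fin m → ℕ))
      (fun f => Finsupp.equivFunOnFinite.symm f) ?_ ?_ ?_ ?_ ?_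
    · intro γ hγ
      rw [Fintype.mem_piFinset]
      intro j
      exact Finset.mem_Iic.mpr (Finsupp.le_def.mp (Finset.mem_Iic.mp hγ) j)
    · intro f hf
      rw [Fintype.mem_piFinset] at hf
      refine Finset.mem_Iic.mpr (Finsupp.le_def.mpr fun j => ?_)
      rw [Finsupp.coe_equivFunOnFinite_symm]
      exact Finset.mem_Iic.mp (hf j)
    · intro γ _
      exact Finsupp.equivFunOnFinite_symm_coe γ
    · intro f _
      rfl
    · intro γ _
      apply Finset.prod_congr rfl
      intro j _
      rfl
  rw [step2, ← Finset.prod_univ_sum (fun j : Fin m => Finset.Iic (σ j))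
    (fun j k => ε ^ k * (-ε) ^ (σ j - k) * ((σ j).choose k : ℂ))]
  obtain ⟨j0, hj0⟩ : ∃ j, σ j ≠ 0 := by
    by_contra h
    push_neg at h
    exact hσ (Finsupp.ext fun j => h j)
  apply Finset.prod_eq_zero (Finset.mem_univ j0)
  rw [Iic_nat, ← add_pow]
  rw [add_neg_cancel]
  exact zero_pow hj0

/- ### the operator -/

/-- The triangular operator with sign parameter ε. -/
def Uop (g : Fin m → MvPowerSeries (Fin m) ℂ) (ε : ℂ)
    (φ : (Fin m →₀ ℕ) → MvPowerSeries (Fin m) ℂ) (β : Fin m →₀ ℕ) :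
    MvPowerSeries (Fin m) ℂ :=
  φ β + mSum (fun γ => if γ = 0 then 0 else
    (ε ^ mdeg γ * binomC β γ) • ((∏ j : Fin m, g j ^ γ j) * φ (β + γ)))

lemma hF_Uop (hg : ∀ j, MvPowerSeries.constantCoeff (g j) = 0) (ε : ℂ)
    (φ : (Fin m →₀ ℕ) → MvPowerSeries (Fin m) ℂ) (β : Fin m →₀ ℕ) :
    ∀ γ, ordGe (if γ = 0 then 0 else
      (ε ^ mdeg γ * binomC β γ) • ((∏ j : Fin m, g j ^ γ j) * φ (β + γ))) (mdeg γ) := by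
  intro γ
  split
  · exact ordGe_zero_series _
  · apply ordGe_smul
    have h2 := ordGe_mul (ordGe_P hg γ) (ordGe_zero (φ (β + γ)))
    rw [add_zero] at h2
    exact h2

lemma coeff_Uop (hg : ∀ j, MvPowerSeries.constantCoeff (g j) = 0) (ε : ℂ)
    (φ : (Fin m →₀ ℕ) → MvPowerSeries (Fin m) ℂ) (β e : Fin m →₀ ℕ) :
    MvPowerSeries.coeff e (Uop g ε φ β) = MvPowerSeries.coeff e (φ β)
      + ∑ γ ∈ Dd e, (if γ = 0 then 0 else
          (ε ^ mdeg γ * binomC β γ) * MvPowerSeries.coeff e (P g γ * φ (β + γ))) := by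
  rw [Uop, map_add, coeff_mSum _ (hF_Uop hg ε φ β) e (Dd e) (fun γ h => mem_Dd.mpr h)]
  congr 1
  apply Finset.sum_congr rfl
  intro γ _
  split
  · simp
  · rw [map_smul, smul_eq_mul]
    rfl

lemma coeff_P_mul_Uop (hg : ∀ j, MvPowerSeries.constantCoeff (g j) = 0) (ε : ℂ)
    (φ : (Fin m →₀ ℕ) → MvPowerSeries (Fin m) ℂ) (β' γ e : Fin m →₀ ℕ) :
    MvPowerSeries.coeff e (P g γ * Uop g ε φ β')
      = MvPowerSeries.coeff e (P g γ * φ β')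
      + ∑ δ ∈ Dd e, (if δ = 0 then 0 else
          (ε ^ mdeg δ * binomC β' δ) * MvPowerSeries.coeff e (P g (γ + δ) * φ (β' + δ))) := by
  rw [Uop, mul_add, map_add, coeff_mul_mSum _ _ (hF_Uop hg ε φ β') e]
  congr 1
  apply Finset.sum_congr rfl
  intro δ _
  split
  · simp
  · rw [mul_smul_comm, map_smul, smul_eq_mul]
    have : P g γ * ((∏ j : Fin m, g j ^ δ j) * φ (β' + δ)) = P g (γ + δ) * φ (β' + δ) := by
      rw [show (∏ j : Fin m, g j ^ δ j) = P g δ from rfl, ← mul_assoc, P_mul_P]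
    rw [this]

/-- The generic summand of the composed operator. -/
def Tc (g : Fin m → MvPowerSeries (Fin m) ℂ) (ε : ℂ)
    (φ : (Fin m →₀ ℕ) → MvPowerSeries (Fin m) ℂ) (β e γ δ : Fin m →₀ ℕ) : ℂ :=
  ε ^ mdeg γ * (-ε) ^ mdeg δ * binomC β γ * binomC (β + γ) δ *
    MvPowerSeries.coeff e (P g (γ + δ) * φ (β + (γ + δ)))

lemma Tc_zero_left (ε : ℂ) (φ : (Fin m →₀ ℕ) → MvPowerSeries (Fin m) ℂ) (β e δ : Fin m →₀ ℕ) :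
    Tc g ε φ β e 0 δ
      = (-ε) ^ mdeg δ * binomC β δ * MvPowerSeries.coeff e (P g δ * φ (β + δ)) := by
  simp [Tc, mdeg_zero, binomC_zero_right]

lemma Tc_zero_right (ε : ℂ) (φ : (Fin m →₀ ℕ) → MvPowerSeries (Fin m) ℂ) (β e γ : Fin m →₀ ℕ) :
    Tc g ε φ β e γ 0
      = ε ^ mdeg γ * binomC β γ * MvPowerSeries.coeff e (P g γ * φ (β + γ)) := by
  simp [Tc, mdeg_zero, binomC_zero_right]

lemma Tc_zero_zero (ε : ℂ) (φ : (Fin m →₀ ℕ) → MvPowerSeries (Fin m) ℂ) (β e : Fin m →₀ ℕ) :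
    Tc g ε φ β e 0 0 = MvPowerSeries.coeff e (φ β) := by
  simp [Tc, mdeg_zero, binomC_zero_right, P_zero]

lemma sum_ite_ne (S : Finset (Fin m →₀ ℕ)) (h0 : (0 : Fin m →₀ ℕ) ∈ S)
    (h : (Fin m →₀ ℕ) → ℂ) :
    ∑ x ∈ S, (if x = 0 then 0 else h x) = (∑ x ∈ S, h x) - h 0 := by
  have h1 : ∑ x ∈ S, (if x = 0 then h x else 0) = h 0 := by
    rw [Finset.sum_ite_eq' S 0 h, if_pos h0]
  rw [eq_sub_iff_add_eq, ← h1, ← Finset.sum_add_distrib]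
  apply Finset.sum_congr rfl
  intro x _
  split <;> ring

/-- Key cancellation: the inner sum over a fixed nonzero total index vanishes. -/
lemma inner_vanish (hg : ∀ j, MvPowerSeries.constantCoeff (g j) = 0) (ε : ℂ)
    (φ : (Fin m →₀ ℕ) → MvPowerSeries (Fin m) ℂ) (β e : Fin m →₀ ℕ)
    {σ : Fin m →₀ ℕ} (hσ : σ ≠ 0) :
    ∑ γ ∈ Finset.Iic σ, Tc g ε φ β e γ (σ - γ) = 0 := by
  have step : ∀ γ ∈ Finset.Iic σ, Tc g ε φ β e γ (σ - γ)
      = (ε ^ mdeg γ * (-ε) ^ mdeg (σ - γ) * ∏ j : Fin m, ((σ j).choose (γ j) : ℂ))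
        * (binomC β σ * MvPowerSeries.coeff e (P g σ * φ (β + σ))) := by
    intro γ hγ
    have hle : γ ≤ σ := Finset.mem_Iic.mp hγ
    have hadd : γ + (σ - γ) = σ := add_tsub_cancel_of_le hle
    have hsplit := binom_split β γ (σ - γ)
    rw [hadd] at hsplit
    rw [Tc, hadd]
    calc ε ^ mdeg γ * (-ε) ^ mdeg (σ - γ) * binomC β γ * binomC (β + γ) (σ - γ) *
          MvPowerSeries.coeff e (P g σ * φ (β + σ))
        = ε ^ mdeg γ * (-ε) ^ mdeg (σ - γ) * (binomC β γ * binomC (β + γ) (σ - γ)) *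
          MvPowerSeries.coeff e (P g σ * φ (β + σ)) := by ring
      _ = ε ^ mdeg γ * (-ε) ^ mdeg (σ - γ) *
          (binomC β σ * ∏ j : Fin m, ((σ j).choose (γ j) : ℂ)) *
          MvPowerSeries.coeff e (P g σ * φ (β + σ)) := by rw [hsplit]
      _ = (ε ^ mdeg γ * (-ε) ^ mdeg (σ - γ) * ∏ j : Fin m, ((σ j).choose (γ j) : ℂ))
          * (binomC β σ * MvPowerSeries.coeff e (P g σ * φ (β + σ))) := by ring
  rw [Finset.sum_congr rfl step, ← Finset.sum_mul, vander ε hσ, zero_mul]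

/-- The double sum of `Tc` collapses to the (0,0) term. -/
lemma double_sum_Tc (hg : ∀ j, MvPowerSeries.constantCoeff (g j) = 0) (ε : ℂ)
    (φ : (Fin m →₀ ℕ) → MvPowerSeries (Fin m) ℂ) (β e : Fin m →₀ ℕ) :
    ∑ γ ∈ Dd e, ∑ δ ∈ Dd e, Tc g ε φ β e γ δ = Tc g ε φ β e 0 0 := by
  rw [← Finset.sum_product']
  have hrestrict : ∑ p ∈ Dd e ×ˢ Dd e, Tc g ε φ β e p.1 p.2
      = ∑ p ∈ (Dd e ×ˢ Dd e).filter (fun p => mdeg (p.1 + p.2) ≤ mdeg e),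
          Tc g ε φ β e p.1 p.2 := by
    symm
    apply Finset.sum_subset (Finset.filter_subset _ _)
    rintro ⟨γ, δ⟩ hp hp'
    have hbig : ¬ mdeg (γ + δ) ≤ mdeg e := fun h => hp' (Finset.mem_filter.mpr ⟨hp, h⟩)
    have : MvPowerSeries.coeff e (P g (γ + δ) * φ (β + (γ + δ))) = 0 :=
      coeff_P_mul_eq_zero hg (by omega) _
    rw [Tc, this, mul_zero]
  rw [hrestrict]
  have hreindex : ∑ p ∈ (Dd e ×ˢ Dd e).filter (fun p => mdeg (p.1 + p.2) ≤ mdeg e),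
        Tc g ε φ β e p.1 p.2
      = ∑ s ∈ (Dd e).sigma (fun σ => Finset.Iic σ), Tc g ε φ β e s.2 (s.1 - s.2) := by
    refine Finset.sum_nbij'
      (fun p => (⟨p.1 + p.2, p.1⟩ : Σ _ : Fin m →₀ ℕ, Fin m →₀ ℕ))
      (fun s => ((s.2, s.1 - s.2) : (Fin m →₀ ℕ) × (Fin m →₀ ℕ))) ?_ ?_ ?_ ?_ ?_
    · rintro ⟨γ, δ⟩ hp
      rw [Finset.mem_filter] at hp
      refine Finset.mem_sigma.mpr ⟨mem_Dd.mpr hp.2, Finset.mem_Iic.mpr le_self_add⟩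
    · rintro ⟨σ, γ⟩ hs
      rw [Finset.mem_sigma] at hs
      obtain ⟨hσ, hγ⟩ := hs
      have hle : γ ≤ σ := Finset.mem_Iic.mp hγ
      have hσn : mdeg σ ≤ mdeg e := mem_Dd.mp hσ
      refine Finset.mem_filter.mpr ⟨Finset.mem_product.mpr ⟨?_, ?_⟩, ?_⟩
      · exact mem_Dd.mpr (le_trans (mdeg_mono hle) hσn)
      · exact mem_Dd.mpr (le_trans (mdeg_mono tsub_le_self) hσn)
      · simpa [add_tsub_cancel_of_le hle] using hσn
    · rintro ⟨γ, δ⟩ _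
      simp [add_tsub_cancel_left]
    · rintro ⟨σ, γ⟩ hs
      rw [Finset.mem_sigma] at hs
      have hle : γ ≤ σ := Finset.mem_Iic.mp hs.2
      exact Sigma.ext (add_tsub_cancel_of_le hle) (heq_of_eq rfl)
    · rintro ⟨γ, δ⟩ _
      simp [add_tsub_cancel_left]
  rw [hreindex, Finset.sum_sigma]
  rw [Finset.sum_eq_single_of_mem 0 (zero_mem_Dd e)]
  · rw [Finset.sum_eq_single_of_mem 0 (Finset.mem_Iic.mpr le_rfl)]
    · simp
    · intro γ hγ hne
      exact absurd (nonpos_iff_eq_zero.mp (Finset.mem_Iic.mp hγ)) hne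
  · intro σ _ hσ0
    exact inner_vanish hg ε φ β e hσ0

/-- Composition identity: `Uop ε ∘ Uop (-ε) = id`. -/
lemma comp (hg : ∀ j, MvPowerSeries.constantCoeff (g j) = 0) (ε : ℂ)
    (φ : (Fin m →₀ ℕ) → MvPowerSeries (Fin m) ℂ) (β : Fin m →₀ ℕ) :
    Uop g ε (Uop g (-ε) φ) β = φ β := by
  apply MvPowerSeries.ext
  intro e
  rw [coeff_Uop hg ε _ β e, coeff_Uop hg (-ε) φ β e]
  have houter : ∀ δ ∈ Dd e,
      (if δ = 0 then 0 else ((-ε) ^ mdeg δ * binomC β δ)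
        * MvPowerSeries.coeff e (P g δ * φ (β + δ)))
      = (if δ = 0 then 0 else Tc g ε φ β e 0 δ) := by
    intro δ _
    split
    · rfl
    · rw [Tc_zero_left]
  have hinner : ∀ γ ∈ Dd e,
      (if γ = 0 then 0 else (ε ^ mdeg γ * binomC β γ)
        * MvPowerSeries.coeff e (P g γ * Uop g (-ε) φ (β + γ)))
      = (if γ = 0 then 0 else ∑ δ ∈ Dd e, Tc g ε φ β e γ δ) := by
    intro γ _
    split
    · rfl
    · rw [coeff_P_mul_Uop hg (-ε) φ (β + γ) γ e, mul_add, Finset.mul_sum]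
      have hterm : ∀ δ ∈ Dd e,
          (ε ^ mdeg γ * binomC β γ) * (if δ = 0 then 0 else
            ((-ε) ^ mdeg δ * binomC (β + γ) δ)
              * MvPowerSeries.coeff e (P g (γ + δ) * φ (β + γ + δ)))
          = (if δ = 0 then 0 else Tc g ε φ β e γ δ) := by
        intro δ _
        split
        · rw [mul_zero]
        · rw [Tc, ← add_assoc]
          ring
      rw [Finset.sum_congr rfl hterm, sum_ite_ne _ (zero_mem_Dd e), Tc_zero_right]
      ring
  rw [Finset.sum_congr rfl houter, Finset.sum_congr rfl hinner,
    sum_ite_ne _ (zero_mem_Dd e) (fun δ => Tc g ε φ β e 0 δ),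
    sum_ite_ne _ (zero_mem_Dd e) (fun γ => ∑ δ ∈ Dd e, Tc g ε φ β e γ δ),
    double_sum_Tc hg ε φ β e, Tc_zero_zero]
  ring_nf
  try ring

end FTI

open FTI in
theorem formal_triangular_inversion {m : ℕ}
    (g : Fin m → MvPowerSeries (Fin m) ℂ)
    (hg : ∀ j, MvPowerSeries.constantCoeff (g j) = 0)
    (ψ ω : (Fin m →₀ ℕ) → MvPowerSeries (Fin m) ℂ) :
    (∀ β : Fin m →₀ ℕ,
      ψ β + mSum (fun γ => if γ = 0 then 0 else
        binomC β γ • ((∏ j : Fin m, g j ^ γ j) * ψ (β + γ))) = ω β)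
    ↔
    (∀ β : Fin m →₀ ℕ,
      ψ β = ω β + mSum (fun γ => if γ = 0 then 0 else
        ((-1 : ℂ) ^ mdeg γ * binomC β γ) • ((∏ j : Fin m, g j ^ γ j) * ω (β + γ)))) := by
  have e1 : ∀ β : Fin m →₀ ℕ, Uop g 1 ψ β
      = ψ β + mSum (fun γ => if γ = 0 then 0 else
          binomC β γ • ((∏ j : Fin m, g j ^ γ j) * ψ (β + γ))) := by
    intro β
    rw [Uop]
    congr 1
    apply congrArg mSum
    funext γ
    split
    · rfl
    · rw [one_pow, one_mul]
  have e2 : ∀ (ω' : (Fin m →₀ ℕ) → MvPowerSeries (Fin m) ℂ) (β : Fin m →₀ ℕ),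
      Uop g (-1 : ℂ) ω' β
      = ω' β + mSum (fun γ => if γ = 0 then 0 else
          ((-1 : ℂ) ^ mdeg γ * binomC β γ) • ((∏ j : Fin m, g j ^ γ j) * ω' (β + γ))) := by
    intro ω' β
    rfl
  constructor
  · intro h β
    have hω : Uop g 1 ψ = ω := funext fun b => by rw [e1]; exact h b
    have hcomp := comp hg (-1 : ℂ) ψ β
    rw [neg_neg] at hcomp
    rw [← e2 ω β, ← hω]
    exact hcomp.symm
  · intro h β
    have hψ : ψ = Uop g (-1 : ℂ) ω := funext fun b => (h b).trans (e2 ω b).symm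
    rw [← e1 β, hψ]
    exact comp hg (1 : ℂ) ω β
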